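/- Let A = ⊕_{i≥0} A_i be a graded Perm (GPerm) algebra: a unital ℕ-graded associative algebra satisfying a(bc) = a(cb) whenever a has positive degree. If A is semiprime (its prime radical is zero), then every homogeneous element of positive degree is central in A. -/

import Mathlib

/-- A semiprime graded Perm (GPerm) algebra: every homogeneous element of
positive degree is central. -/
theorem stmt6 {k A : Type*} [Field k] [Ring A] [Algebra k A]
    (𝒜 : ℕ → Submodule k A) [GradedAlgebra 𝒜]
    (hperm : ∀ i, 1 ≤ i → ∀ a ∈ 𝒜 i, ∀ b c : A, a * (b * c) = a * (c * b))
    (hsemiprime : ∀ I : TwoSidedIdeal A,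
      (∀ x ∈ I, ∀ y ∈ I, x * y = 0) → ∀ x ∈ I, x = 0) :
    ∀ i, 1 ≤ i → ∀ a ∈ 𝒜 i, ∀ b : A, a * b = b * a := by
  intro i hi a ha b
  set t : A := a * b - b * a with ht
  -- a kills any commutator on the left
  have hcomm : ∀ x y : A, a * (x * y - y * x) = 0 := by
    intro x y
    rw [mul_sub, hperm i hi a ha x y, sub_self]
  -- key : a * (z * t) = 0 for all z
  have hkey : ∀ z : A, a * (z * t) = 0 := by
    intro z
    have h1 : a * (z * t) = a * (t * z) := hperm i hi a ha z t
    have h2 : t * z = a * (b * z) - b * (a * z) := by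
      rw [ht, sub_mul, mul_assoc, mul_assoc]
    have h3 : a * (b * (a * z)) = a * (a * (z * b)) := by
      rw [hperm i hi a ha b (a * z), mul_assoc a z b]
    calc a * (z * t) = a * (a * (b * z)) - a * (b * (a * z)) := by
          rw [h1, h2, mul_sub]
      _ = a * (a * (b * z - z * b)) := by rw [h3, ← mul_sub, ← mul_sub]
      _ = 0 := by rw [hcomm b z, mul_zero]
  -- t * z * t = 0 for all z
  have htzt : ∀ z : A, t * (z * t) = 0 := by
    intro z
    have : t * (z * t) = a * (b * (z * t)) - b * (a * (z * t)) := by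
      rw [ht, sub_mul, mul_assoc, mul_assoc]
    rw [this, hkey z, mul_zero, sub_zero, ← mul_assoc b z t, hkey (b * z)]
  -- the two-sided ideal generated by t
  set S : Set A := {y | ∃ u v : A, y = u * t * v} with hS
  set C : AddSubgroup A := AddSubgroup.closure S with hC
  have hmulL : ∀ {x y : A}, y ∈ C → x * y ∈ C := by
    intro x y hy
    induction hy using AddSubgroup.closure_induction with
    | mem z hz =>
      obtain ⟨u, v, rfl⟩ := hz
      exact AddSubgroup.subset_closure ⟨x * u, v, by noncomm_ring⟩
    | zero => simpa using zero_mem C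
    | add p q hp hq ihp ihq => simpa [mul_add] using add_mem ihp ihq
    | neg p hp ihp => simpa [mul_neg] using neg_mem ihp
  have hmulR : ∀ {x y : A}, x ∈ C → x * y ∈ C := by
    intro x y hx
    induction hx using AddSubgroup.closure_induction with
    | mem z hz =>
      obtain ⟨u, v, rfl⟩ := hz
      exact AddSubgroup.subset_closure ⟨u, v * y, by noncomm_ring⟩
    | zero => simpa using zero_mem C
    | add p q hp hq ihp ihq => simpa [add_mul] using add_mem ihp ihq
    | neg p hp ihp => simpa [neg_mul] using neg_mem ihp
  set I : TwoSidedIdeal A :=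
    TwoSidedIdeal.mk' C (zero_mem C) (fun hx hy => add_mem hx hy)
      (fun hx => neg_mem hx) hmulL hmulR with hI
  have hmemI : ∀ x : A, x ∈ I ↔ x ∈ C := fun x => TwoSidedIdeal.mem_mk' _ _ _ _ _ _ x
  -- I squares to zero
  have hsq : ∀ x ∈ I, ∀ y ∈ I, x * y = 0 := by
    intro x hx y hy
    rw [hmemI] at hx hy
    -- first: generators annihilate everything in C on the left... rather:
    have hgen : ∀ u v : A, ∀ y ∈ C, (u * t * v) * y = 0 := by
      intro u v y hy
      induction hy using AddSubgroup.closure_induction with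
      | mem z hz =>
        obtain ⟨u', v', rfl⟩ := hz
        calc u * t * v * (u' * t * v') = u * (t * ((v * u') * t)) * v' := by noncomm_ring
          _ = 0 := by rw [htzt (v * u'), mul_zero, zero_mul]
      | zero => simp
      | add p q hp hq ihp ihq => rw [mul_add, ihp, ihq, add_zero]
      | neg p hp ihp => rw [mul_neg, ihp, neg_zero]
    induction hx using AddSubgroup.closure_induction with
    | mem z hz =>
      obtain ⟨u, v, rfl⟩ := hz
      exact hgen u v y hy
    | zero => simp
    | add p q hp hq ihp ihq => rw [add_mul, ihp, ihq, add_zero]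
    | neg p hp ihp => rw [neg_mul, ihp, neg_zero]
  have htI : t ∈ I := by
    rw [hmemI]
    exact AddSubgroup.subset_closure ⟨1, 1, by noncomm_ring⟩
  have := hsemiprime I hsq t htI
  rw [ht] at this
  exact sub_eq_zero.mp this
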